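/- Let p be a prime, F = ZMod p, and let Q(F) be the set of quadratic phase functions φ(x) = e_p(r x² + s x), r,s ∈ F. Suppose f : F → ℂ has ‖f‖₂ ≤ 1 (uniform probability measure) and ε ≥ 4 p^{-1/8}. Then there exist complex numbers λ_φ (φ ∈ Q(F)) such that: (a) ‖f − ∑_φ λ_φ φ‖_{u₃⁺} ≤ ε; (b) ‖∑_φ λ_φ φ‖₂² ≤ 3; (c) ∑_φ |λ_φ| ≤ 4/ε. -/

import Mathlib

open Finset Complex

/-- The additive character `e_p(t) = exp(2πi t / p)`. -/
noncomputable def ep (p : ℕ) (t : ZMod p) : ℂ :=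
  Complex.exp (2 * Real.pi * Complex.I * (t.val : ℂ) / (p : ℂ))

noncomputable def epz (p : ℕ) (m : ℤ) : ℂ :=
  Complex.exp (2 * Real.pi * Complex.I * (m : ℂ) / (p : ℂ))

lemma epz_add (p : ℕ) (m n : ℤ) : epz p (m + n) = epz p m * epz p n := by
  rw [epz, epz, epz, ← Complex.exp_add]
  congr 1
  push_cast
  ring

lemma epz_mul_self (p : ℕ) (hp : p ≠ 0) (k : ℤ) : epz p ((p : ℤ) * k) = 1 := by
  rw [epz]
  have : 2 * (Real.pi:ℂ) * Complex.I * ((((p:ℤ)*k : ℤ)) : ℂ) / (p : ℂ)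
      = (k : ℂ) * (2 * (Real.pi:ℂ) * Complex.I) := by
    have hp' : (p : ℂ) ≠ 0 := by exact_mod_cast hp
    field_simp
    push_cast
    ring
  rw [this]
  exact_mod_cast Complex.exp_int_mul_two_pi_mul_I k

lemma ep_eq_epz (p : ℕ) [NeZero p] (a : ZMod p) (m : ℤ) (h : (m : ZMod p) = a) :
    ep p a = epz p m := by
  have h2 : ((a.val : ℤ) : ZMod p) = a := by
    simpa using ZMod.natCast_val a
  have hd : (p : ℤ) ∣ (m - a.val) := by
    rw [← ZMod.intCast_zmod_eq_zero_iff_dvd, Int.cast_sub, h, h2, sub_self]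
  obtain ⟨k, hk⟩ := hd
  have : m = (a.val : ℤ) + (p:ℤ) * k := by linarith [hk]
  rw [this, epz_add, epz_mul_self p (NeZero.ne p), mul_one]
  rw [ep, epz]
  norm_num

lemma ep_add (p : ℕ) [NeZero p] (a b : ZMod p) : ep p (a + b) = ep p a * ep p b := by
  rw [ep_eq_epz p (a+b) ((a.val : ℤ) + b.val) (by push_cast [ZMod.natCast_val]; ring),
    epz_add, ← ep_eq_epz p a (a.val) (by simp [ZMod.natCast_val]),
    ← ep_eq_epz p b (b.val) (by simp [ZMod.natCast_val])]

lemma ep_zero (p : ℕ) : ep p 0 = 1 := by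
  rw [ep]
  simp

lemma norm_ep (p : ℕ) (t : ZMod p) : ‖ep p t‖ = 1 := by
  rw [ep]
  rw [Complex.norm_exp]
  have : (2 * (Real.pi:ℂ) * Complex.I * (t.val : ℂ) / (p : ℂ)).re = 0 := by
    simp [Complex.div_re, Complex.mul_re, Complex.mul_im]
  rw [this, Real.exp_zero]

lemma ep_ne_zero (p : ℕ) (t : ZMod p) : ep p t ≠ 0 := Complex.exp_ne_zero _

lemma conj_ep (p : ℕ) [NeZero p] (t : ZMod p) : (starRingEnd ℂ) (ep p t) = ep p (-t) := by
  have h1 : ep p t * ep p (-t) = 1 := by rw [← ep_add]; simp [ep_zero]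
  have h2 : ep p t * (starRingEnd ℂ) (ep p t) = 1 := by
    rw [Complex.mul_conj]
    norm_cast
    rw [Complex.normSq_eq_norm_sq, norm_ep]; norm_num
  have := h1.trans h2.symm
  exact (mul_left_cancel₀ (ep_ne_zero p t) this).symm

lemma ep_ne_one (p : ℕ) [NeZero p] (t : ZMod p) (ht : t ≠ 0) : ep p t ≠ 1 := by
  intro h
  rw [ep, Complex.exp_eq_one_iff] at h
  obtain ⟨n, hn⟩ := h
  have hp : (p : ℂ) ≠ 0 := by exact_mod_cast (NeZero.ne p)
  have h2 : 2 * (Real.pi:ℂ) * Complex.I ≠ 0 := by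
    simp [Real.pi_ne_zero, Complex.I_ne_zero, Complex.ofReal_ne_zero]
  have hv : (t.val : ℂ) = n * p := by
    rw [mul_div_assoc] at hn
    have : ((t.val : ℂ) / p) = n := by
      have := mul_left_cancel₀ h2 (hn.trans (mul_comm _ _))
      exact this
    rwa [div_eq_iff hp] at this
  have hvz : (t.val : ℤ) = n * p := by exact_mod_cast hv
  have h1 : 0 < t.val := Nat.pos_of_ne_zero (fun hh => ht ((ZMod.val_eq_zero t).mp hh))
  have h3 : t.val < p := ZMod.val_lt t
  have hpz : (0:ℤ) < p := by exact_mod_cast Nat.pos_of_ne_zero (NeZero.ne p)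
  have h4 : (t.val:ℤ) < p := by exact_mod_cast h3
  have h5 : (0:ℤ) < t.val := by exact_mod_cast h1
  rcases le_or_gt n 0 with hn0 | hn0
  · nlinarith
  · nlinarith

lemma sum_ep_mul_eq_zero (p : ℕ) [NeZero p] (b : ZMod p) (hb : b ≠ 0) :
    ∑ x : ZMod p, ep p (b * x) = 0 := by
  have key : ep p b * ∑ x : ZMod p, ep p (b * x) = ∑ x : ZMod p, ep p (b * x) := by
    rw [Finset.mul_sum]
    calc ∑ x : ZMod p, ep p b * ep p (b * x)
        = ∑ x : ZMod p, ep p (b * x + b) := by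
          refine Finset.sum_congr rfl (fun x _ => ?_)
          rw [← ep_add]
          ring_nf
      _ = ∑ x : ZMod p, ep p (b * x) := by
          refine Fintype.sum_equiv (Equiv.addRight (1 : ZMod p)) _ _ (fun x => ?_)
          simp only [Equiv.coe_addRight]
          ring_nf
  have h2 : (ep p b - 1) * ∑ x : ZMod p, ep p (b * x) = 0 := by
    rw [sub_mul, one_mul, key, sub_self]
  rcases mul_eq_zero.mp h2 with h | h
  · exact absurd (sub_eq_zero.mp h) (ep_ne_one p b hb)
  · exact h

lemma norm_sum_quad (p : ℕ) [Fact p.Prime] (hodd : p ≠ 2) (a b : ZMod p) (ha : a ≠ 0) :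
    ‖∑ x : ZMod p, ep p (a * x ^ 2 + b * x)‖ = Real.sqrt p := by
  set S := ∑ x : ZMod p, ep p (a * x ^ 2 + b * x) with hS
  have two_ne : (2 : ZMod p) ≠ 0 := by
    intro h
    have : p ∣ 2 := by exact_mod_cast (ZMod.natCast_eq_zero_iff 2 p).mp (by exact_mod_cast h)
    exact hodd ((Nat.prime_dvd_prime_iff_eq Fact.out Nat.prime_two).mp this)
  have key : S * (starRingEnd ℂ) S = (p : ℂ) := by
    rw [hS, map_sum]
    simp_rw [conj_ep]
    rw [Finset.sum_mul_sum]
    calc ∑ x : ZMod p, ∑ y : ZMod p, ep p (a * x ^ 2 + b * x) * ep p (-(a * y ^ 2 + b * y))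
        = ∑ y : ZMod p, ∑ x : ZMod p, ep p (a * x ^ 2 + b * x - (a * y ^ 2 + b * y)) := by
          rw [Finset.sum_comm]
          exact Finset.sum_congr rfl (fun y _ => Finset.sum_congr rfl (fun x _ => by
            rw [← ep_add]; ring_nf))
      _ = ∑ y : ZMod p, ∑ h : ZMod p, ep p (a * h ^ 2 + b * h) * ep p ((2 * a * h) * y) := by
          refine Finset.sum_congr rfl (fun y _ => ?_)
          refine Fintype.sum_equiv (Equiv.subRight y) _ _ (fun h => ?_)
          simp only [Equiv.subRight_apply]
          rw [← ep_add]
          congr 1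
          ring
      _ = ∑ h : ZMod p, ep p (a * h ^ 2 + b * h) * ∑ y : ZMod p, ep p ((2 * a * h) * y) := by
          rw [Finset.sum_comm]
          exact Finset.sum_congr rfl (fun h _ => by rw [Finset.mul_sum])
      _ = (p : ℂ) := by
          rw [Finset.sum_eq_single 0]
          · simp [ep_zero, ZMod.card]
          · intro h _ hne
            rw [sum_ep_mul_eq_zero p _ (by
              exact mul_ne_zero (mul_ne_zero two_ne ha) hne), mul_zero]
          · intro h; exact absurd (Finset.mem_univ 0) h
  have hnsq : Complex.normSq S = p := by
    have := (Complex.mul_conj S).symm.trans key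
    exact_mod_cast this
  rw [Complex.norm_def, hnsq]

noncomputable def qphase (p : ℕ) (rs : ZMod p × ZMod p) (x : ZMod p) : ℂ :=
  ep p (rs.1 * x ^ 2 + rs.2 * x)

noncomputable def inn (p : ℕ) [NeZero p] (f g : ZMod p → ℂ) : ℂ :=
  (1 / (p : ℂ)) * ∑ x : ZMod p, f x * (starRingEnd ℂ) (g x)

lemma inn_self_eq (p : ℕ) [NeZero p] (f : ZMod p → ℂ) :
    inn p f f = (((1 / (p : ℝ)) * ∑ x : ZMod p, ‖f x‖ ^ 2 : ℝ) : ℂ) := by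
  rw [inn]
  have hx : ∀ x : ZMod p, f x * (starRingEnd ℂ) (f x) = ((‖f x‖ ^ 2 : ℝ) : ℂ) := fun x => by
    rw [Complex.mul_conj]; norm_cast; rw [Complex.normSq_eq_norm_sq]
  simp only [hx]
  push_cast
  norm_num

lemma norm_qphase (p : ℕ) (rs : ZMod p × ZMod p) (x : ZMod p) : ‖qphase p rs x‖ = 1 :=
  norm_ep p _

lemma inn_qphase_self (p : ℕ) [NeZero p] (rs : ZMod p × ZMod p) :
    inn p (qphase p rs) (qphase p rs) = 1 := by
  have hp : (p : ℂ) ≠ 0 := by exact_mod_cast NeZero.ne p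
  rw [inn]
  have : ∀ x : ZMod p, qphase p rs x * (starRingEnd ℂ) (qphase p rs x) = 1 := by
    intro x
    rw [Complex.mul_conj]
    norm_cast
    rw [Complex.normSq_eq_norm_sq, norm_qphase]; norm_num
  simp only [this]
  rw [Finset.sum_const, Finset.card_univ, ZMod.card, nsmul_eq_mul, mul_one]
  field_simp

lemma inn_qphase_qphase (p : ℕ) [Fact p.Prime] (hodd : p ≠ 2)
    (rs rs' : ZMod p × ZMod p) (h : rs ≠ rs') :
    ‖inn p (qphase p rs) (qphase p rs')‖ ≤ (Real.sqrt p)⁻¹ := by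
  have hp0 : 0 < (p : ℝ) := by exact_mod_cast (Fact.out : p.Prime).pos
  have hsp : (0:ℝ) < Real.sqrt p := Real.sqrt_pos.mpr hp0
  have key : inn p (qphase p rs) (qphase p rs') =
      (1 / (p : ℂ)) * ∑ x : ZMod p, ep p ((rs.1 - rs'.1) * x ^ 2 + (rs.2 - rs'.2) * x) := by
    rw [inn]
    congr 1
    refine Finset.sum_congr rfl (fun x _ => ?_)
    rw [qphase, qphase, conj_ep, ← ep_add]
    congr 1
    ring
  have hne : ¬((rs.1 - rs'.1) = 0 ∧ (rs.2 - rs'.2) = 0) := by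
    rintro ⟨h1, h2⟩
    exact h (Prod.ext (by linear_combination h1) (by linear_combination h2))
  have hb : ‖∑ x : ZMod p, ep p ((rs.1 - rs'.1) * x ^ 2 + (rs.2 - rs'.2) * x)‖ ≤ Real.sqrt p := by
    by_cases ha : rs.1 - rs'.1 = 0
    · have hb' : rs.2 - rs'.2 ≠ 0 := fun hb' => hne ⟨ha, hb'⟩
      rw [show ∑ x : ZMod p, ep p ((rs.1 - rs'.1) * x ^ 2 + (rs.2 - rs'.2) * x)
          = ∑ x : ZMod p, ep p ((rs.2 - rs'.2) * x) by
        refine Finset.sum_congr rfl (fun x _ => ?_); rw [ha]; ring_nf,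
        sum_ep_mul_eq_zero p _ hb']
      simpa using Real.sqrt_nonneg (p:ℝ)
    · exact le_of_eq (norm_sum_quad p hodd _ _ ha)
  rw [key, norm_mul]
  have h1p : ‖(1 / (p:ℂ))‖ = 1 / (p:ℝ) := by
    rw [norm_div, norm_one, Complex.norm_natCast]
  rw [h1p]
  calc (1 / (p:ℝ)) * ‖∑ x : ZMod p, ep p ((rs.1 - rs'.1) * x ^ 2 + (rs.2 - rs'.2) * x)‖
      ≤ (1 / (p:ℝ)) * Real.sqrt p := by
        apply mul_le_mul_of_nonneg_left hb (by positivity)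
    _ = (Real.sqrt p)⁻¹ := by
        rw [div_mul_eq_mul_div, one_mul, ← Real.sqrt_mul_self hp0.le]
        field_simp
        rw [Real.sq_sqrt (by positivity)]

lemma norm_inn_le (p : ℕ) [NeZero p] (f g : ZMod p → ℂ) :
    ‖inn p f g‖ ≤ Real.sqrt ((1 / (p : ℝ)) * ∑ x : ZMod p, ‖f x‖ ^ 2) *
      Real.sqrt ((1 / (p : ℝ)) * ∑ x : ZMod p, ‖g x‖ ^ 2) := by
  have hp0 : 0 < (p : ℝ) := by exact_mod_cast Nat.pos_of_ne_zero (NeZero.ne p)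
  have h1 : ‖inn p f g‖ ≤ (1 / (p:ℝ)) * ∑ x : ZMod p, ‖f x‖ * ‖g x‖ := by
    rw [inn, norm_mul]
    have h1p : ‖(1 / (p:ℂ))‖ = 1 / (p:ℝ) := by
      rw [norm_div, norm_one, Complex.norm_natCast]
    rw [h1p]
    apply mul_le_mul_of_nonneg_left _ (by positivity)
    refine (norm_sum_le _ _).trans ?_
    refine le_of_eq (Finset.sum_congr rfl (fun x _ => ?_))
    rw [norm_mul, RCLike.norm_conj]
  have h2 : (∑ x : ZMod p, ‖f x‖ * ‖g x‖) ^ 2 ≤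
      (∑ x : ZMod p, ‖f x‖ ^ 2) * ∑ x : ZMod p, ‖g x‖ ^ 2 :=
    Finset.sum_mul_sq_le_sq_mul_sq _ _ _
  have h3 : ∑ x : ZMod p, ‖f x‖ * ‖g x‖ ≤
      Real.sqrt (∑ x : ZMod p, ‖f x‖ ^ 2) * Real.sqrt (∑ x : ZMod p, ‖g x‖ ^ 2) := by
    have := Real.sqrt_le_sqrt h2
    rwa [Real.sqrt_sq (by positivity), Real.sqrt_mul (by positivity)] at this
  calc ‖inn p f g‖ ≤ (1 / (p:ℝ)) * ∑ x : ZMod p, ‖f x‖ * ‖g x‖ := h1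
    _ ≤ (1 / (p:ℝ)) * (Real.sqrt (∑ x : ZMod p, ‖f x‖ ^ 2) *
          Real.sqrt (∑ x : ZMod p, ‖g x‖ ^ 2)) :=
        mul_le_mul_of_nonneg_left h3 (by positivity)
    _ = _ := by
        rw [Real.sqrt_mul (by positivity : (0:ℝ) ≤ 1/(p:ℝ)),
          Real.sqrt_mul (by positivity : (0:ℝ) ≤ 1/(p:ℝ))]
        have hss : Real.sqrt (1/(p:ℝ)) * Real.sqrt (1/(p:ℝ)) = 1/(p:ℝ) :=
          Real.mul_self_sqrt (by positivity)
        linear_combination -(Real.sqrt (∑ x : ZMod p, ‖f x‖ ^ 2) *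
          Real.sqrt (∑ x : ZMod p, ‖g x‖ ^ 2)) * hss

lemma inn_sub_left (p : ℕ) [NeZero p] (f g h : ZMod p → ℂ) :
    inn p (fun x => f x - g x) h = inn p f h - inn p g h := by
  rw [inn, inn, inn, ← mul_sub, ← Finset.sum_sub_distrib]
  congr 1
  exact Finset.sum_congr rfl (fun x _ => by ring)

lemma inn_sum_left {ι : Type*} (p : ℕ) [NeZero p] (s : Finset ι) (lam : ι → ℂ)
    (φ : ι → ZMod p → ℂ) (g : ZMod p → ℂ) :
    inn p (fun x => ∑ i ∈ s, lam i * φ i x) g = ∑ i ∈ s, lam i * inn p (φ i) g := by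
  simp only [inn, Finset.sum_mul, Finset.mul_sum]
  rw [Finset.sum_comm]
  exact Finset.sum_congr rfl (fun i _ => Finset.sum_congr rfl (fun x _ => by ring))

lemma inn_sum_right {ι : Type*} (p : ℕ) [NeZero p] (s : Finset ι) (lam : ι → ℂ)
    (φ : ι → ZMod p → ℂ) (f : ZMod p → ℂ) :
    inn p f (fun x => ∑ i ∈ s, lam i * φ i x) =
      ∑ i ∈ s, (starRingEnd ℂ) (lam i) * inn p f (φ i) := by
  simp only [inn, map_sum, map_mul, Finset.mul_sum, Finset.sum_mul]
  rw [Finset.sum_comm]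
  exact Finset.sum_congr rfl (fun i _ => Finset.sum_congr rfl (fun x _ => by ring))

lemma conj_qphase (p : ℕ) [NeZero p] (rs : ZMod p × ZMod p) (x : ZMod p) :
    (starRingEnd ℂ) (qphase p rs x) = ep p (-(rs.1 * x ^ 2 + rs.2 * x)) :=
  conj_ep p _

set_option maxHeartbeats 1000000 in
theorem stmt4 (p : ℕ) [Fact p.Prime] (f : ZMod p → ℂ)
    (hf : (1 / (p : ℝ)) * ∑ x : ZMod p, ‖f x‖ ^ 2 ≤ 1)
    (ε : ℝ) (hε : 4 * (p : ℝ) ^ (-(1 : ℝ) / 8) ≤ ε) :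
    ∃ lam : ZMod p × ZMod p → ℂ,
      (∀ a b : ZMod p,
        ‖(1 / (p : ℂ)) * ∑ x : ZMod p,
            (f x - ∑ rs : ZMod p × ZMod p, lam rs * ep p (rs.1 * x ^ 2 + rs.2 * x)) *
              ep p (-(a * x ^ 2 + b * x))‖ ≤ ε) ∧
      (1 / (p : ℝ)) * ∑ x : ZMod p,
          ‖∑ rs : ZMod p × ZMod p, lam rs * ep p (rs.1 * x ^ 2 + rs.2 * x)‖ ^ 2 ≤ 3 ∧
      ∑ rs : ZMod p × ZMod p, ‖lam rs‖ ≤ 4 / ε := by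
  have hp : p.Prime := Fact.out
  have hp0 : 0 < (p : ℝ) := by exact_mod_cast hp.pos
  have hε0 : 0 < ε := lt_of_lt_of_le (by positivity) hε
  have hqn : ∀ rs : ZMod p × ZMod p,
      (1 / (p : ℝ)) * ∑ x : ZMod p, ‖qphase p rs x‖ ^ 2 = 1 := by
    intro rs
    simp only [norm_qphase, one_pow, Finset.sum_const, Finset.card_univ, ZMod.card,
      nsmul_eq_mul, mul_one]
    field_simp
  have hcorr : ∀ rs : ZMod p × ZMod p, ‖inn p f (qphase p rs)‖ ≤ 1 := by
    intro rs
    refine (norm_inn_le p f (qphase p rs)).trans ?_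
    rw [hqn rs, Real.sqrt_one, mul_one]
    calc Real.sqrt ((1 / (p : ℝ)) * ∑ x : ZMod p, ‖f x‖ ^ 2)
        ≤ Real.sqrt 1 := Real.sqrt_le_sqrt hf
      _ = 1 := Real.sqrt_one
  -- rewriting the u3+ correlation as an inner product
  have key : ∀ (g : ZMod p → ℂ) (a b : ZMod p),
      (1 / (p : ℂ)) * ∑ x : ZMod p, (f x - g x) * ep p (-(a * x ^ 2 + b * x))
        = inn p (fun x => f x - g x) (qphase p ((a, b) : ZMod p × ZMod p)) := by
    intro g a b
    rw [inn]
    congr 1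
    refine Finset.sum_congr rfl (fun x _ => ?_)
    rw [conj_qphase]
  by_cases hε2 : 2 < ε
  · -- trivial case: take lam = 0
    refine ⟨0, ?_, ?_, ?_⟩
    · intro a b
      have h0 : (1 / (p : ℂ)) * ∑ x : ZMod p,
          (f x - ∑ rs : ZMod p × ZMod p, (0:ℂ) * ep p (rs.1 * x ^ 2 + rs.2 * x)) *
            ep p (-(a * x ^ 2 + b * x))
          = inn p f (qphase p ((a, b) : ZMod p × ZMod p)) := by
        rw [inn]
        congr 1
        refine Finset.sum_congr rfl (fun x _ => ?_)
        rw [conj_qphase]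
        simp
      simp only [Pi.zero_apply] at *
      rw [h0]
      exact (hcorr _).trans (by linarith)
    · simp only [Pi.zero_apply, zero_mul, Finset.sum_const_zero, norm_zero]
      norm_num
    · simp only [Pi.zero_apply, norm_zero, Finset.sum_const_zero]
      positivity
  · push_neg at hε2
    -- ε ≤ 2, hence p ≥ 256, p ≠ 2
    have h8 : (p : ℝ) ^ (-(1 : ℝ) / 8) ≤ ε / 4 := by linarith
    have h80 : 0 < (p : ℝ) ^ (-(1 : ℝ) / 8) := Real.rpow_pos_of_pos hp0 _
    have hinv : (p : ℝ)⁻¹ = ((p : ℝ) ^ (-(1 : ℝ) / 8)) ^ (8 : ℕ) := by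
      rw [← Real.rpow_natCast ((p : ℝ) ^ (-(1 : ℝ) / 8)) 8, ← Real.rpow_mul hp0.le]
      norm_num
      exact (Real.rpow_neg_one _).symm
    have hp256 : (256 : ℝ) ≤ (p : ℝ) := by
      have h1 : (p : ℝ)⁻¹ ≤ (ε / 4) ^ (8 : ℕ) := by
        rw [hinv]; exact pow_le_pow_left₀ h80.le h8 8
      have h2 : (ε / 4) ^ (8:ℕ) ≤ (1/2 : ℝ) ^ (8:ℕ) := pow_le_pow_left₀ (by positivity) (by linarith) 8
      have h3 : (p:ℝ)⁻¹ * p = 1 := inv_mul_cancel₀ hp0.ne'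
      nlinarith [h1, h2, h3, hp0]
    have hpne2 : p ≠ 2 := by
      intro h
      rw [h] at hp256
      norm_num at hp256
    set η : ℝ := (Real.sqrt (p : ℝ))⁻¹ with hηdef
    have hη0 : 0 ≤ η := by positivity
    have hηε : η ≤ ε ^ 4 / 256 := by
      have h1 : η = ((p : ℝ) ^ (-(1 : ℝ) / 8)) ^ (4 : ℕ) := by
        rw [hηdef, ← Real.rpow_natCast ((p : ℝ) ^ (-(1 : ℝ) / 8)) 4, ← Real.rpow_mul hp0.le,
          Real.sqrt_eq_rpow, ← Real.rpow_neg hp0.le]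
        norm_num
      rw [h1]
      calc ((p : ℝ) ^ (-(1 : ℝ) / 8)) ^ (4:ℕ) ≤ (ε / 4) ^ (4:ℕ) :=
            pow_le_pow_left₀ h80.le h8 4
        _ = ε ^ 4 / 256 := by ring
    -- the correlation function and the large spectrum
    set C : ZMod p × ZMod p → ℂ := fun rs => inn p f (qphase p rs) with hC
    set Λ : Finset (ZMod p × ZMod p) := univ.filter (fun rs => ε / 2 ≤ ‖C rs‖) with hΛ
    set T : ℝ := ∑ rs ∈ Λ, ‖C rs‖ with hTdef
    set E : ℝ := ∑ rs ∈ Λ, ‖C rs‖ ^ 2 with hEdef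
    have hT0 : 0 ≤ T := Finset.sum_nonneg (fun rs _ => norm_nonneg _)
    have hE0 : 0 ≤ E := Finset.sum_nonneg (fun rs _ => sq_nonneg _)
    set lam : ZMod p × ZMod p → ℂ := fun rs => if ε / 2 ≤ ‖C rs‖ then C rs else 0 with hlam
    have hg_eq : ∀ x : ZMod p,
        (∑ rs : ZMod p × ZMod p, lam rs * ep p (rs.1 * x ^ 2 + rs.2 * x))
          = ∑ rs ∈ Λ, C rs * qphase p rs x := by
      intro x
      rw [hΛ, Finset.sum_filter]
      refine Finset.sum_congr rfl (fun rs _ => ?_)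
      by_cases h : ε / 2 ≤ ‖C rs‖ <;> simp [hlam, h, qphase]
    -- basic counting facts
    have hTn : T ≤ (Λ.card : ℝ) := by
      calc T ≤ ∑ rs ∈ Λ, (1:ℝ) := Finset.sum_le_sum (fun rs _ => hcorr rs)
        _ = Λ.card := by simp
    have hnE : (Λ.card : ℝ) * (ε / 2) ^ 2 ≤ E := by
      calc (Λ.card : ℝ) * (ε / 2) ^ 2 = ∑ _rs ∈ Λ, (ε / 2) ^ 2 := by
            rw [Finset.sum_const, nsmul_eq_mul]
        _ ≤ E := Finset.sum_le_sum (fun rs h => by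
            have hm := (Finset.mem_filter.mp (hΛ ▸ h)).2
            exact pow_le_pow_left₀ (by positivity) hm 2)
    have hT2 : T ^ 2 ≤ (Λ.card : ℝ) * E := by
      have := Finset.sum_mul_sq_le_sq_mul_sq Λ (fun _ => (1:ℝ)) (fun rs => ‖C rs‖)
      simpa [hTdef, hEdef] using this
    -- energy identity
    have hIfg : inn p f (fun x => ∑ rs ∈ Λ, C rs * qphase p rs x) = (E : ℂ) := by
      rw [inn_sum_right p Λ C (qphase p) f, hEdef]
      push_cast
      refine Finset.sum_congr rfl (fun rs _ => ?_)
      rw [mul_comm, Complex.mul_conj]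
      norm_cast
      rw [Complex.normSq_eq_norm_sq]
    set Ng : ℝ := (1 / (p : ℝ)) * ∑ x : ZMod p, ‖∑ rs ∈ Λ, C rs * qphase p rs x‖ ^ 2
      with hNgdef
    have hNg0 : 0 ≤ Ng := by positivity
    -- E ≤ sqrt Ng
    have hE_sqrt : E ≤ Real.sqrt Ng := by
      have h1 : ‖inn p f (fun x => ∑ rs ∈ Λ, C rs * qphase p rs x)‖
          ≤ Real.sqrt ((1 / (p : ℝ)) * ∑ x : ZMod p, ‖f x‖ ^ 2) * Real.sqrt Ng := by
        rw [hNgdef]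
        exact norm_inn_le p f _
      rw [hIfg] at h1
      have h2 : ‖((E:ℝ) : ℂ)‖ = E := by
        rw [Complex.norm_real, Real.norm_eq_abs, _root_.abs_of_nonneg hE0]
      rw [h2] at h1
      have h3 : Real.sqrt ((1 / (p : ℝ)) * ∑ x : ZMod p, ‖f x‖ ^ 2) ≤ 1 := by
        calc Real.sqrt ((1 / (p : ℝ)) * ∑ x : ZMod p, ‖f x‖ ^ 2)
            ≤ Real.sqrt 1 := Real.sqrt_le_sqrt hf
          _ = 1 := Real.sqrt_one
      nlinarith [Real.sqrt_nonneg Ng]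
    have hE2Ng : E ^ 2 ≤ Ng := by
      have := pow_le_pow_left₀ hE0 hE_sqrt 2
      rwa [Real.sq_sqrt hNg0] at this
    -- near-orthogonality: Ng ≤ E + η * T^2
    have hinnb : ∀ rs rs' : ZMod p × ZMod p, rs ≠ rs' →
        ‖inn p (qphase p rs) (qphase p rs')‖ ≤ η := fun rs rs' h =>
      inn_qphase_qphase p hpne2 rs rs' h
    have hNg_le : Ng ≤ E + η * T ^ 2 := by
      have hgg : (Ng : ℂ) = inn p (fun x => ∑ rs ∈ Λ, C rs * qphase p rs x)
          (fun x => ∑ rs ∈ Λ, C rs * qphase p rs x) := by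
        rw [inn_self_eq, hNgdef]
      have hexp : inn p (fun x => ∑ rs ∈ Λ, C rs * qphase p rs x)
          (fun x => ∑ rs ∈ Λ, C rs * qphase p rs x)
          = ∑ rs ∈ Λ, C rs * ∑ rs' ∈ Λ, (starRingEnd ℂ) (C rs') *
              inn p (qphase p rs) (qphase p rs') := by
        rw [inn_sum_left p Λ C (qphase p) _]
        refine Finset.sum_congr rfl (fun rs _ => ?_)
        rw [inn_sum_right p Λ C (qphase p) _]
      have hNgnorm : Ng = ‖((Ng:ℝ) : ℂ)‖ := by
        rw [Complex.norm_real, Real.norm_eq_abs, _root_.abs_of_nonneg hNg0]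
      rw [hNgnorm, hgg, hexp]
      calc ‖∑ rs ∈ Λ, C rs * ∑ rs' ∈ Λ, (starRingEnd ℂ) (C rs') *
              inn p (qphase p rs) (qphase p rs')‖
          ≤ ∑ rs ∈ Λ, ‖C rs * ∑ rs' ∈ Λ, (starRingEnd ℂ) (C rs') *
              inn p (qphase p rs) (qphase p rs')‖ := norm_sum_le _ _
        _ ≤ ∑ rs ∈ Λ, ‖C rs‖ * (‖C rs‖ + η * T) := by
            refine Finset.sum_le_sum (fun rs hrs => ?_)
            rw [norm_mul]
            refine mul_le_mul_of_nonneg_left ?_ (norm_nonneg _)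
            rw [← Finset.add_sum_erase Λ _ hrs, inn_qphase_self p rs, mul_one]
            calc ‖(starRingEnd ℂ) (C rs) + ∑ rs' ∈ Λ.erase rs, (starRingEnd ℂ) (C rs') *
                    inn p (qphase p rs) (qphase p rs')‖
                ≤ ‖(starRingEnd ℂ) (C rs)‖ + ‖∑ rs' ∈ Λ.erase rs, (starRingEnd ℂ) (C rs') *
                    inn p (qphase p rs) (qphase p rs')‖ := norm_add_le _ _
              _ ≤ ‖C rs‖ + η * T := by
                  rw [RCLike.norm_conj]
                  refine add_le_add le_rfl ?_
                  calc ‖∑ rs' ∈ Λ.erase rs, (starRingEnd ℂ) (C rs') *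
                          inn p (qphase p rs) (qphase p rs')‖
                      ≤ ∑ rs' ∈ Λ.erase rs, ‖(starRingEnd ℂ) (C rs') *
                          inn p (qphase p rs) (qphase p rs')‖ := norm_sum_le _ _
                    _ ≤ ∑ rs' ∈ Λ.erase rs, ‖C rs'‖ * η := by
                        refine Finset.sum_le_sum (fun rs' hrs' => ?_)
                        rw [norm_mul, RCLike.norm_conj]
                        exact mul_le_mul_of_nonneg_left
                          (hinnb rs rs' (Ne.symm (Finset.ne_of_mem_erase hrs')))
                          (norm_nonneg _)
                    _ ≤ ∑ rs' ∈ Λ, ‖C rs'‖ * η :=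
                        Finset.sum_le_sum_of_subset_of_nonneg (Finset.erase_subset _ _)
                          (fun _ _ _ => by positivity)
                    _ = η * T := by rw [← Finset.sum_mul, hTdef, mul_comm]
        _ = E + η * T ^ 2 := by
            rw [hEdef, hTdef]
            have hterm : ∀ rs : ZMod p × ZMod p, ‖C rs‖ * (‖C rs‖ + η * T)
                = ‖C rs‖^2 + ‖C rs‖ * (η * T) := fun rs => by ring
            simp only [hterm, ← hTdef]
            rw [Finset.sum_add_distrib, ← Finset.sum_mul]
            rw [← hTdef]; ring
    -- numeric chase
    have hn0 : (0:ℝ) ≤ (Λ.card : ℝ) := Nat.cast_nonneg _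
    have hE1 : E ≤ 1 + η * Λ.card := by
      have h1 : η * T ^ 2 ≤ η * ((Λ.card : ℝ) * E) := mul_le_mul_of_nonneg_left hT2 hη0
      have hstep : E * E ≤ E * (1 + η * Λ.card) := by nlinarith [hE2Ng, hNg_le, h1]
      rcases eq_or_lt_of_le hE0 with h | h
      · rw [← h]
        positivity
      · exact le_of_mul_le_mul_left hstep h
    have hcard : (Λ.card : ℝ) * ε ^ 2 ≤ 8 := by
      have hu0 : (0:ℝ) ≤ (Λ.card : ℝ) * ε ^ 2 := by positivity
      have hε4 : ε ^ 2 ≤ 4 := by nlinarith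
      have hkey : (Λ.card : ℝ) * ε ^ 4 ≤ 4 * ((Λ.card : ℝ) * ε ^ 2) := by
        nlinarith [mul_le_mul_of_nonneg_left hε4 hu0]
      nlinarith [hnE, hE1, mul_le_mul_of_nonneg_left hηε hn0, hkey]
    have hE98 : E ≤ 9/8 := by
      have hu0 : (0:ℝ) ≤ (Λ.card : ℝ) * ε ^ 2 := by positivity
      have hε4 : ε ^ 2 ≤ 4 := by nlinarith
      have hkey : (Λ.card : ℝ) * ε ^ 4 ≤ 4 * ((Λ.card : ℝ) * ε ^ 2) := by
        nlinarith [mul_le_mul_of_nonneg_left hε4 hu0]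
      nlinarith [hE1, hcard, mul_le_mul_of_nonneg_left hηε hn0, hkey]
    have hTe : T * ε ≤ 3 := by
      have h1 : (T * ε) ^ 2 ≤ 9 := by
        nlinarith [mul_le_mul_of_nonneg_right hT2 (sq_nonneg ε),
          mul_le_mul_of_nonneg_right hE98 (mul_nonneg hn0 (sq_nonneg ε)), hcard, hn0, hE0,
          sq_nonneg ε]
      nlinarith [mul_nonneg hT0 hε0.le, h1]
    have hT3 : T ≤ 3 / ε := by
      rw [le_div_iff₀ hε0]
      exact hTe
    have hηT : η * T ≤ ε / 2 := by
      have h1 : η * T ≤ (ε ^ 4 / 256) * (3 / ε) :=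
        mul_le_mul hηε hT3 hT0 (by positivity)
      have h2 : (ε ^ 4 / 256) * (3 / ε) = 3 * ε ^ 3 / 256 := by
        field_simp
      rw [h2] at h1
      nlinarith [hε0, hε2]
    have hηT2 : η * T ^ 2 ≤ 3 / 2 := by
      have h1 : η * T ^ 2 = (η * T) * T := by ring
      have h2 : (η * T) * T ≤ (ε / 2) * (3 / ε) :=
        mul_le_mul hηT hT3 hT0 (by positivity)
      have h3 : (ε / 2) * (3 / ε) = 3 / 2 := by field_simp
      rw [h1]
      calc (η * T) * T ≤ (ε / 2) * (3 / ε) := h2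
        _ = 3 / 2 := h3
    clear_value Ng η C Λ T E lam
    have hNg3 : Ng ≤ 3 := by linarith [hNg_le, hE98, hηT2]
    -- conclusion
    refine ⟨lam, ?_, ?_, ?_⟩
    · intro a b
      simp only [hg_eq]
      have hbound : ∀ s : Finset (ZMod p × ZMod p), s ⊆ Λ →
          ((a, b) : ZMod p × ZMod p) ∉ s →
          ‖∑ rs ∈ s, C rs * inn p (qphase p rs) (qphase p ((a, b) : ZMod p × ZMod p))‖
            ≤ η * T := by
        intro s hs hnot
        calc ‖∑ rs ∈ s, C rs * inn p (qphase p rs) (qphase p ((a, b) : ZMod p × ZMod p))‖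
            ≤ ∑ rs ∈ s, ‖C rs‖ * η := by
              refine (norm_sum_le _ _).trans (Finset.sum_le_sum (fun rs hrs => ?_))
              rw [norm_mul]
              exact mul_le_mul_of_nonneg_left
                (hinnb rs (a, b) (fun hh => hnot (hh ▸ hrs))) (norm_nonneg _)
          _ ≤ ∑ rs ∈ Λ, ‖C rs‖ * η :=
              Finset.sum_le_sum_of_subset_of_nonneg hs (fun _ _ _ => by positivity)
          _ = η * T := by rw [← Finset.sum_mul, hTdef, mul_comm]
      have heq : (1 / (p:ℂ)) * ∑ x : ZMod p,
          (f x - ∑ rs ∈ Λ, C rs * qphase p rs x) * ep p (-(a * x ^ 2 + b * x))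
          = C (a, b) - ∑ rs ∈ Λ, C rs *
              inn p (qphase p rs) (qphase p ((a, b) : ZMod p × ZMod p)) := by
        have h1 : (1 / (p:ℂ)) * ∑ x : ZMod p,
            (f x - ∑ rs ∈ Λ, C rs * qphase p rs x) * ep p (-(a * x ^ 2 + b * x))
            = inn p f (qphase p ((a, b) : ZMod p × ZMod p)) -
              inn p (fun x => ∑ rs ∈ Λ, C rs * qphase p rs x)
                (qphase p ((a, b) : ZMod p × ZMod p)) := by
          rw [inn, inn, ← mul_sub, ← Finset.sum_sub_distrib]
          congr 1
          refine Finset.sum_congr rfl (fun x _ => ?_)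
          rw [conj_qphase]
          ring
        rw [h1, inn_sum_left p Λ C (qphase p) (qphase p ((a, b) : ZMod p × ZMod p))]
        simp only [hC]
      rw [heq]
      by_cases hmem : ((a, b) : ZMod p × ZMod p) ∈ Λ
      · rw [← Finset.add_sum_erase Λ _ hmem, inn_qphase_self p ((a, b)), mul_one,
          sub_add_cancel_left, norm_neg]
        calc ‖∑ rs ∈ Λ.erase (a, b), C rs *
                inn p (qphase p rs) (qphase p ((a, b) : ZMod p × ZMod p))‖
            ≤ η * T := hbound _ (Finset.erase_subset _ _) (Finset.notMem_erase _ _)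
          _ ≤ ε := by linarith
      · have hsmall : ‖C (a, b)‖ < ε / 2 := by
          by_contra hcon
          push_neg at hcon
          exact hmem (by rw [hΛ]; exact Finset.mem_filter.mpr ⟨Finset.mem_univ _, hcon⟩)
        calc ‖C (a, b) - ∑ rs ∈ Λ, C rs *
                inn p (qphase p rs) (qphase p ((a, b) : ZMod p × ZMod p))‖
            ≤ ‖C (a, b)‖ + ‖∑ rs ∈ Λ, C rs *
                inn p (qphase p rs) (qphase p ((a, b) : ZMod p × ZMod p))‖ :=
              norm_sub_le _ _
          _ ≤ ε / 2 + η * T := add_le_add hsmall.le (hbound Λ (subset_refl _) hmem)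
          _ ≤ ε := by linarith
    · simp only [hg_eq]
      rw [← hNgdef]
      exact hNg3
    · have hsum : ∑ rs : ZMod p × ZMod p, ‖lam rs‖ = T := by
        rw [hTdef, hΛ, Finset.sum_filter]
        refine Finset.sum_congr rfl (fun rs _ => ?_)
        have hl : lam rs = if ε / 2 ≤ ‖C rs‖ then C rs else 0 := by rw [hlam]
        rw [hl]
        split_ifs with h
        · rfl
        · exact norm_zero
      rw [hsum]
      exact hT3.trans ((div_le_div_iff_of_pos_right hε0).mpr (by norm_num))
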